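/- Let |ν| ≠ 1, t ≠ 0, and N ∈ ℕ with N > 1 + |ν|. Define A_N = {ξ₁ : |(1+|ν|)ξ₁ + sgn(ν)N| < (1+|ν|)(4⟨t⟩N)^{-1}} and B_N = {ξ₂ : |2ξ₂ - sgn(ν)N| < (4⟨t⟩N)^{-1}}. Then for all ξ₁ ∈ A_N and ξ₂ ∈ B_N: (a) sgn(ξ₁) = -sgn(ν); (b) c₁N ≤ ⟨ξ₁⟩, ⟨ξ₂⟩, ⟨ξ₁+ξ₂⟩ ≤ c₂N for absolute constants 0 < c₁ ≤ c₂ depending only on ν; (c) |(ξ₁+ξ₂)² - ν|ξ₁|ξ₁ - ξ₂²| < 1/|t|. -/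

import Mathlib

/-- The Japanese bracket `⟨t⟩ = √(1 + t²)`. -/
noncomputable def jb (t : ℝ) : ℝ := Real.sqrt (1 + t ^ 2)

/-- `sgn x = x/|x|` for `x ≠ 0`, and `sgn 0 = 1`. -/
noncomputable def sgn (x : ℝ) : ℝ := if x = 0 then 1 else x / |x|

lemma one_le_jb (t : ℝ) : 1 ≤ jb t := by
  have h := Real.sq_sqrt (show (0:ℝ) ≤ 1 + t ^ 2 by positivity)
  have h2 := Real.sqrt_nonneg (1 + t ^ 2)
  unfold jb
  nlinarith [sq_nonneg t]

lemma abs_le_jb (t : ℝ) : |t| ≤ jb t := by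
  unfold jb
  rw [← Real.sqrt_sq_eq_abs]
  exact Real.sqrt_le_sqrt (by nlinarith)

lemma abs_lt_jb (t : ℝ) : |t| < jb t := by
  unfold jb
  rw [← Real.sqrt_sq_eq_abs]
  exact Real.sqrt_lt_sqrt (sq_nonneg t) (by linarith)

lemma jb_le_one_add_abs (t : ℝ) : jb t ≤ 1 + |t| := by
  unfold jb
  calc Real.sqrt (1 + t ^ 2) ≤ Real.sqrt ((1 + |t|) ^ 2) :=
        Real.sqrt_le_sqrt (by nlinarith [abs_nonneg t, sq_abs t])
    _ = 1 + |t| := Real.sqrt_sq (by positivity)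

lemma sgn_of_pos {x : ℝ} (h : 0 < x) : sgn x = 1 := by
  unfold sgn
  rw [if_neg h.ne', abs_of_pos h, div_self h.ne']

lemma sgn_of_nonneg {x : ℝ} (h : 0 ≤ x) : sgn x = 1 := by
  rcases h.eq_or_lt with h0 | h0
  · unfold sgn; rw [if_pos h0.symm]
  · exact sgn_of_pos h0

lemma sgn_of_neg {x : ℝ} (h : x < 0) : sgn x = -1 := by
  unfold sgn
  rw [if_neg h.ne, abs_of_neg h, div_neg, div_self h.ne]

lemma sgn_mul_self (x : ℝ) : sgn x * x = |x| := by
  rcases lt_trichotomy x 0 with h | h | h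
  · rw [sgn_of_neg h, abs_of_neg h]; ring
  · simp [h, sgn]
  · rw [sgn_of_pos h, abs_of_pos h]; ring

lemma abs_sgn (x : ℝ) : |sgn x| = 1 := by
  rcases le_or_gt 0 x with h | h
  · rw [sgn_of_nonneg h]; norm_num
  · rw [sgn_of_neg h]; norm_num

lemma abs_sub' (a b : ℝ) : |a - b| ≤ |a| + |b| := by
  simpa [sub_eq_add_neg] using abs_add_le a (-b)

set_option maxHeartbeats 1000000 in
/-- Frequency localization properties in the ill-posedness proof for `s' < -1/2`:
for `ξ₁ ∈ A_N`, `ξ₂ ∈ B_N` one has `sgn ξ₁ = -sgn ν`,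
`⟨ξ₁⟩ ~ ⟨ξ₂⟩ ~ ⟨ξ₁+ξ₂⟩ ~ N` (with constants depending only on `ν`), and
`|(ξ₁+ξ₂)² - ν|ξ₁|ξ₁ - ξ₂²| < 1/|t|`. -/
theorem stmt_14 (ν : ℝ) (hν : |ν| ≠ 1) :
    ∃ c₁ c₂ : ℝ, 0 < c₁ ∧ c₁ ≤ c₂ ∧
      ∀ t : ℝ, t ≠ 0 → ∀ N : ℕ, (N : ℝ) > 1 + |ν| →
        ∀ ξ₁ ξ₂ : ℝ,
          |(1 + |ν|) * ξ₁ + sgn ν * N| < (1 + |ν|) / (4 * jb t * N) →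
          |2 * ξ₂ - sgn ν * N| < 1 / (4 * jb t * N) →
          sgn ξ₁ = -sgn ν ∧
          (c₁ * N ≤ jb ξ₁ ∧ jb ξ₁ ≤ c₂ * N) ∧
          (c₁ * N ≤ jb ξ₂ ∧ jb ξ₂ ≤ c₂ * N) ∧
          (c₁ * N ≤ jb (ξ₁ + ξ₂) ∧ jb (ξ₁ + ξ₂) ≤ c₂ * N) ∧
          |(ξ₁ + ξ₂) ^ 2 - ν * |ξ₁| * ξ₁ - ξ₂ ^ 2| < 1 / |t| := by
  have ha : (0:ℝ) ≤ |ν| := abs_nonneg ν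
  have h1a : (0:ℝ) < 1 + |ν| := by linarith
  have hb : (0:ℝ) < abs (|ν| - 1) := abs_pos.mpr (sub_ne_zero.mpr hν)
  have hb' : abs (|ν| - 1) ≤ 1 + |ν| := by
    rcases abs_cases (|ν| - 1) with ⟨h, _⟩ | ⟨h, _⟩ <;> linarith
  refine ⟨min (1/(2*(1+|ν|))) (abs (|ν| - 1)/(8*(1+|ν|))), 3, ?_, ?_, ?_⟩
  · exact lt_min (by positivity) (by positivity)
  · refine le_trans (min_le_left _ _) ?_
    rw [div_le_iff₀ (by positivity)]
    nlinarith
  intro t ht N hN ξ₁ ξ₂ h1 h2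
  set C := min (1/(2*(1+|ν|))) (abs (|ν| - 1)/(8*(1+|ν|))) with hCdef
  have hT : 1 ≤ jb t := one_le_jb t
  have hTt : |t| < jb t := abs_lt_jb t
  have ht0 : (0:ℝ) < |t| := abs_pos.mpr ht
  have hN1 : (1:ℝ) < N := by linarith
  have hN2 : (2:ℝ) ≤ N := by exact_mod_cast (by exact_mod_cast hN1 : 1 < N)
  have hN0 : (0:ℝ) < N := by linarith
  have hTN : (0:ℝ) < 4 * jb t * N := by positivity
  have h8 : (8:ℝ) ≤ 4 * jb t * N := by nlinarith
  -- bounds with /8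
  have hE1 : |(1 + |ν|) * ξ₁ + sgn ν * N| < (1 + |ν|) / 8 := by
    refine lt_of_lt_of_le h1 ?_
    rw [div_le_div_iff₀ hTN (by norm_num)]
    nlinarith
  have hE2 : |2 * ξ₂ - sgn ν * N| < 1 / 8 := by
    refine lt_of_lt_of_le h2 ?_
    rw [div_le_div_iff₀ hTN (by norm_num)]
    nlinarith
  have hsn : |sgn ν * (N:ℝ)| = N := by
    rw [abs_mul, abs_sgn, one_mul, abs_of_pos hN0]
  -- abs bounds on ξ₁
  have habs1 : |(1 + |ν|) * ξ₁| = (1 + |ν|) * |ξ₁| := by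
    rw [abs_mul, abs_of_pos h1a]
  have q1 : N - (1 + |ν|)/8 < (1 + |ν|) * |ξ₁| := by
    have k : (N:ℝ) ≤ |(1 + |ν|) * ξ₁ + sgn ν * N| + |(1 + |ν|) * ξ₁| := by
      calc (N:ℝ) = |sgn ν * (N:ℝ)| := hsn.symm
        _ = |((1 + |ν|) * ξ₁ + sgn ν * N) - (1 + |ν|) * ξ₁| := by ring_nf
        _ ≤ _ := abs_sub' _ _
    rw [habs1] at k
    linarith
  have q2 : (1 + |ν|) * |ξ₁| < N + (1 + |ν|)/8 := by
    have k : |(1 + |ν|) * ξ₁| ≤ |(1 + |ν|) * ξ₁ + sgn ν * N| + N := by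
      calc |(1 + |ν|) * ξ₁| = |((1 + |ν|) * ξ₁ + sgn ν * N) - sgn ν * N| := by ring_nf
        _ ≤ |(1 + |ν|) * ξ₁ + sgn ν * N| + |sgn ν * (N:ℝ)| := abs_sub' _ _
        _ = _ := by rw [hsn]
    rw [habs1] at k
    linarith
  -- abs bounds on ξ₂
  have habs2 : |(2:ℝ) * ξ₂| = 2 * |ξ₂| := by
    rw [abs_mul]; norm_num
  have q3 : N - 1/8 < 2 * |ξ₂| := by
    have k : (N:ℝ) ≤ |2 * ξ₂ - sgn ν * N| + |(2:ℝ) * ξ₂| := by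
      calc (N:ℝ) = |sgn ν * (N:ℝ)| := hsn.symm
        _ = |(2 * ξ₂) - (2 * ξ₂ - sgn ν * N)| := by ring_nf
        _ ≤ |(2:ℝ) * ξ₂| + |2 * ξ₂ - sgn ν * N| := abs_sub' _ _
        _ = _ := by ring
    rw [habs2] at k
    linarith
  have q4 : 2 * |ξ₂| < N + 1/8 := by
    have k : |(2:ℝ) * ξ₂| ≤ |2 * ξ₂ - sgn ν * N| + N := by
      calc |(2:ℝ) * ξ₂| = |(2 * ξ₂ - sgn ν * N) - (-(sgn ν * N))| := by ring_nf
        _ ≤ |2 * ξ₂ - sgn ν * N| + |(-(sgn ν * (N:ℝ)))| := abs_sub' _ _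
        _ = |2 * ξ₂ - sgn ν * N| + N := by rw [abs_neg, hsn]
    rw [habs2] at k
    linarith
  -- sum lower bound
  have qs : N * abs (|ν| - 1) - 3 * (1 + |ν|)/8 < 2 * (1 + |ν|) * |ξ₁ + ξ₂| := by
    have key : sgn ν * N * (|ν| - 1)
        = (2 * (1 + |ν|) * (ξ₁ + ξ₂)) - (2 * ((1 + |ν|) * ξ₁ + sgn ν * N))
          - ((1 + |ν|) * (2 * ξ₂ - sgn ν * N)) := by ring
    have k1 : |sgn ν * N * (|ν| - 1)| = N * abs (|ν| - 1) := by
      rw [abs_mul, abs_mul, abs_sgn, one_mul, abs_of_pos hN0]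
    have k2 : |sgn ν * N * (|ν| - 1)|
        ≤ |2 * (1 + |ν|) * (ξ₁ + ξ₂)| + |2 * ((1 + |ν|) * ξ₁ + sgn ν * N)|
          + |(1 + |ν|) * (2 * ξ₂ - sgn ν * N)| := by
      rw [key]
      refine le_trans (abs_sub' _ _) ?_
      have := abs_sub' (2 * (1 + |ν|) * (ξ₁ + ξ₂)) (2 * ((1 + |ν|) * ξ₁ + sgn ν * N))
      linarith
    have k3 : |2 * (1 + |ν|) * (ξ₁ + ξ₂)| = 2 * (1 + |ν|) * |ξ₁ + ξ₂| := by
      rw [abs_mul, abs_of_pos (show (0:ℝ) < 2 * (1 + |ν|) by linarith)]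
    have k4 : |2 * ((1 + |ν|) * ξ₁ + sgn ν * N)| < (1 + |ν|)/4 := by
      rw [abs_mul, abs_two]
      linarith [hE1]
    have k5 : |(1 + |ν|) * (2 * ξ₂ - sgn ν * N)| < (1 + |ν|)/8 := by
      rw [abs_mul, abs_of_pos h1a]
      nlinarith [hE2, abs_nonneg (2 * ξ₂ - sgn ν * N)]
    rw [k1, k3] at k2
    linarith
  -- constant facts
  have hCa : C * (2*(1+|ν|)) ≤ 1 := by
    have := min_le_left (1/(2*(1+|ν|))) (abs (|ν| - 1)/(8*(1+|ν|)))
    rw [← hCdef] at this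
    calc C * (2*(1+|ν|)) ≤ (1/(2*(1+|ν|))) * (2*(1+|ν|)) := by
          exact mul_le_mul_of_nonneg_right this (by positivity)
      _ = 1 := by field_simp
  have hCb : C * (8*(1+|ν|)) ≤ abs (|ν| - 1) := by
    have := min_le_right (1/(2*(1+|ν|))) (abs (|ν| - 1)/(8*(1+|ν|)))
    rw [← hCdef] at this
    calc C * (8*(1+|ν|)) ≤ (abs (|ν| - 1)/(8*(1+|ν|))) * (8*(1+|ν|)) := by
          exact mul_le_mul_of_nonneg_right this (by positivity)
      _ = abs (|ν| - 1) := by field_simp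
  have hC0 : 0 < C := by
    rw [hCdef]; exact lt_min (by positivity) (by positivity)
  clear_value C
  clear hCdef
  have hC8 : C * 8 ≤ 1 := by nlinarith
  -- (a)
  have hsgn : sgn ξ₁ = -sgn ν := by
    rcases le_or_gt 0 ν with hν0 | hν0
    · have hs1 : sgn ν = 1 := sgn_of_nonneg hν0
      rw [hs1] at hE1
      have hneg : ξ₁ < 0 := by
        have := (abs_lt.mp hE1).2
        nlinarith
      rw [hs1, sgn_of_neg hneg]
    · have hs1 : sgn ν = -1 := sgn_of_neg hν0
      rw [hs1] at hE1
      have hpos : 0 < ξ₁ := by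
        have := (abs_lt.mp hE1).1
        nlinarith
      rw [hs1, sgn_of_pos hpos]
      norm_num
  refine ⟨hsgn, ⟨?_, ?_⟩, ⟨?_, ?_⟩, ⟨?_, ?_⟩, ?_⟩
  · -- C * N ≤ jb ξ₁
    nlinarith [abs_le_jb ξ₁, mul_le_mul_of_nonneg_right hCa hN0.le, q1,
      mul_le_mul_of_nonneg_left (abs_le_jb ξ₁) h1a.le, mul_pos h1a hN0]
  · -- jb ξ₁ ≤ 3 N
    nlinarith [jb_le_one_add_abs ξ₁, q2, abs_nonneg ξ₁, mul_nonneg ha (abs_nonneg ξ₁)]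
  · -- C * N ≤ jb ξ₂
    nlinarith [abs_le_jb ξ₂, q3, mul_le_mul_of_nonneg_right hC8 hN0.le]
  · -- jb ξ₂ ≤ 3 N
    nlinarith [jb_le_one_add_abs ξ₂, q4]
  · -- C * N ≤ jb (ξ₁+ξ₂)
    rcases le_or_gt (N * abs (|ν| - 1)) (8*(1+|ν|)) with hcase | hcase
    · nlinarith [one_le_jb (ξ₁ + ξ₂), mul_le_mul_of_nonneg_right hCb hN0.le, h1a]
    · nlinarith [abs_le_jb (ξ₁ + ξ₂), qs, mul_le_mul_of_nonneg_right hCb hN0.le,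
        mul_le_mul_of_nonneg_left (abs_le_jb (ξ₁ + ξ₂)) h1a.le, h1a]
  · -- jb (ξ₁+ξ₂) ≤ 3 N
    nlinarith [jb_le_one_add_abs (ξ₁ + ξ₂), abs_add_le ξ₁ ξ₂, q2, q4,
      mul_nonneg ha (abs_nonneg ξ₁)]
  · -- (c)
    have habsx : |ξ₁| = -(sgn ν) * ξ₁ := by
      rw [← sgn_mul_self ξ₁, hsgn]
    have hsv : sgn ν * ν = |ν| := sgn_mul_self ν
    have hΦ : (ξ₁ + ξ₂) ^ 2 - ν * |ξ₁| * ξ₁ - ξ₂ ^ 2 = ξ₁ * ((1 + |ν|) * ξ₁ + 2 * ξ₂) := by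
      rw [habsx]
      linear_combination ξ₁ ^ 2 * hsv
    have heq : (2 + |ν|)/(4 * jb t * N)
        = (1 + |ν|)/(4 * jb t * N) + 1/(4 * jb t * N) := by
      rw [← add_div]
      ring_nf
    have hY : |(1 + |ν|) * ξ₁ + 2 * ξ₂| < (2 + |ν|)/(4 * jb t * N) := by
      have hsplit : (1 + |ν|) * ξ₁ + 2 * ξ₂
          = ((1 + |ν|) * ξ₁ + sgn ν * N) + (2 * ξ₂ - sgn ν * N) := by ring
      rw [hsplit, heq]
      exact lt_of_le_of_lt (abs_add_le _ _) (add_lt_add h1 h2)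
    have hY' : |(1 + |ν|) * ξ₁ + 2 * ξ₂| * (4 * jb t * N) < 2 + |ν| :=
      (lt_div_iff₀ hTN).mp hY
    have hP1 : (1 + |ν|) * |ξ₁| ≤ 3 * N / 2 := by linarith
    have k : ((1 + |ν|) * |ξ₁|) * (|(1 + |ν|) * ξ₁ + 2 * ξ₂| * (4 * jb t * N))
        ≤ (3 * N / 2) * (2 + |ν|) :=
      mul_le_mul hP1 hY'.le (by positivity) (by positivity)
    have k2 : (4 * N * (1 + |ν|)) * (|ξ₁| * |(1 + |ν|) * ξ₁ + 2 * ξ₂| * jb t)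
        ≤ (4 * N * (1 + |ν|)) * 1 := by
      linarith [k, mul_nonneg ha hN0.le]
    have hmain : |ξ₁| * |(1 + |ν|) * ξ₁ + 2 * ξ₂| * jb t ≤ 1 :=
      le_of_mul_le_mul_left k2 (by positivity)
    have hfin : |ξ₁ * ((1 + |ν|) * ξ₁ + 2 * ξ₂)| ≤ 1 / jb t := by
      rw [le_div_iff₀ (by linarith : (0:ℝ) < jb t), abs_mul]
      exact hmain
    rw [hΦ]
    exact lt_of_le_of_lt hfin (one_div_lt_one_div_of_lt ht0 hTt)
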